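/- For an odd prime p and an integer r with 1 ≤ r ≤ p, the sum ∑_{k=1}^{p-r} (k^p - k) is congruent modulo p^2 to (B_{p+1}(r) - B_{p+1}(0))/(p+1) - (1+p-r)(p-r)/2, where B_{p+1}(x) is the (p+1)-st Bernoulli polynomial. -/

import Mathlib

open Finset

/-- Key symmetric-interval divisibility: p² divides ∑_{k=a}^{p-a} k^p for odd p. -/
lemma aux_sym (p : ℕ) (hodd : Odd p) (a : ℕ) :
    ((p : ℤ))^2 ∣ ∑ k ∈ Finset.Icc a (p - a), (k : ℤ) ^ p := by
  rcases le_or_gt a (p - a) with hle | hlt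
  · have hap : a ≤ p := le_trans hle (Nat.sub_le _ _)
    -- each k in interval satisfies k ≤ p
    have hmem : ∀ k ∈ Finset.Icc a (p - a), p - k ∈ Finset.Icc a (p - a) := by
      intro k hk
      simp only [Finset.mem_Icc] at hk ⊢
      omega
    have hrefl : ∑ k ∈ Finset.Icc a (p - a), ((p : ℤ) - (k : ℤ)) ^ p
        = ∑ k ∈ Finset.Icc a (p - a), (k : ℤ) ^ p := by
      apply Finset.sum_nbij' (fun k => p - k) (fun k => p - k) hmem hmem
      · intro k hk; simp only [Finset.mem_Icc] at hk; omega
      · intro k hk; simp only [Finset.mem_Icc] at hk; omega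
      · intro k hk
        simp only [Finset.mem_Icc] at hk
        have : ((p - k : ℕ) : ℤ) = (p : ℤ) - k := by
          have : k ≤ p := by omega
          push_cast [this]; ring
        rw [this]
    have h2 : ((p:ℤ))^2 ∣ 2 * ∑ k ∈ Finset.Icc a (p - a), (k : ℤ) ^ p := by
      have : 2 * ∑ k ∈ Finset.Icc a (p - a), (k : ℤ) ^ p
          = ∑ k ∈ Finset.Icc a (p - a), ((k : ℤ) ^ p + ((p : ℤ) - k) ^ p) := by
        rw [Finset.sum_add_distrib, hrefl]; ring
      rw [this]
      apply Finset.dvd_sum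
      intro k hk
      have hd : ((p:ℤ)) ∣ ((p : ℤ) - k) - (-(k:ℤ)) := by
        simp
      have := dvd_sub_pow_of_dvd_sub hd 1
      norm_num at this
      rw [hodd.neg_pow, sub_neg_eq_add, add_comm] at this
      exact this
    have hco : IsCoprime ((p:ℤ)^2) 2 := by
      have hnc : Nat.Coprime p 2 := by
        rcases hodd with ⟨t, ht⟩
        subst ht
        have hmod : (2 * t + 1) % 2 = 1 := by omega
        unfold Nat.Coprime
        rw [Nat.gcd_comm, Nat.gcd_rec, hmod, Nat.gcd_one_left]
      have : IsCoprime ((p:ℤ)) ((2:ℕ):ℤ) := Nat.isCoprime_iff_coprime.mpr hnc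
      simp only [Nat.cast_ofNat] at this
      exact this.pow_left
    exact hco.dvd_of_dvd_mul_left h2
  · rw [Finset.Icc_eq_empty (by omega)]
    simp

theorem stmt_7 (p : ℕ) (hp : p.Prime) (hodd : Odd p) (r : ℕ) (h1 : 1 ≤ r) (h2 : r ≤ p) :
    ∃ m : ℤ, (∑ k ∈ Finset.Icc 1 (p - r), ((k : ℚ) ^ p - (k : ℚ)))
      - ((((Polynomial.bernoulli (p + 1)).eval (r : ℚ)
            - (Polynomial.bernoulli (p + 1)).eval 0) / ((p : ℚ) + 1))
          - (1 + (p : ℚ) - r) * ((p : ℚ) - r) / 2)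
      = ((p : ℚ) ^ 2) * (m : ℚ) := by
  set n := p - r with hn
  have hp1 : ((p : ℚ) + 1) ≠ 0 := by positivity
  -- Bernoulli difference = (p+1) * ∑_{k<r} k^p
  have hB0 : (Polynomial.bernoulli (p + 1)).eval (0 : ℚ) = _root_.bernoulli (p+1) := by
    have := Polynomial.bernoulli_succ_eval 0 p
    simpa using this
  have hBr : (Polynomial.bernoulli (p + 1)).eval (r : ℚ)
      - (Polynomial.bernoulli (p + 1)).eval 0
      = ((p:ℚ) + 1) * ∑ k ∈ range r, (k : ℚ) ^ p := by
    rw [hB0, Polynomial.bernoulli_succ_eval r p]; ring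
  -- sum over Icc 1 n of k^p = sum over range (n+1)
  have hIcc : ∀ (f : ℕ → ℚ), f 0 = 0 →
      ∑ k ∈ Finset.Icc 1 n, f k = ∑ k ∈ range (n+1), f k := by
    intro f hf
    rw [Finset.range_eq_Ico, Finset.sum_eq_sum_Ico_succ_bot (by omega) f, hf, zero_add]
    congr 1
  -- Gauss
  have hGauss : ∑ k ∈ Finset.Icc 1 n, (k : ℚ) = (1 + (n:ℚ)) * (n:ℚ) / 2 := by
    have h := Finset.sum_range_id_mul_two (n+1)
    simp only [Nat.add_sub_cancel] at h
    have hc2 := congrArg (Nat.cast : ℕ → ℚ) h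
    push_cast at hc2
    have this := hc2
    rw [hIcc (fun k => (k:ℚ)) (by simp)]
    push_cast
    linarith
  have hpr : ((p : ℚ)) - r = (n : ℚ) := by
    rw [hn]; push_cast [Nat.cast_sub h2]; ring
  -- the integer divisibility
  obtain ⟨m, hm⟩ : ((p : ℤ))^2 ∣
      (∑ k ∈ range (n+1), (k : ℤ) ^ p) - ∑ k ∈ range r, (k : ℤ) ^ p := by
    rcases le_or_gt r (n+1) with hc | hc
    · have : (∑ k ∈ range (n+1), (k : ℤ) ^ p) - ∑ k ∈ range r, (k : ℤ) ^ p
          = ∑ k ∈ Finset.Icc r n, (k : ℤ) ^ p := by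
        rw [← Finset.Ico_add_one_right_eq_Icc]
        exact (Finset.sum_Ico_eq_sub _ hc).symm
      rw [this]
      have : p - r = n := hn.symm
      rw [← this]
      exact aux_sym p hodd r
    · have hIr : Finset.Icc (n+1) (r-1) = Finset.Ico (n+1) r := by
        rw [← Finset.Ico_add_one_right_eq_Icc]
        congr 1
        omega
      have : (∑ k ∈ range (n+1), (k : ℤ) ^ p) - ∑ k ∈ range r, (k : ℤ) ^ p
          = -∑ k ∈ Finset.Icc (n+1) (r-1), (k : ℤ) ^ p := by
        rw [hIr, Finset.sum_Ico_eq_sub _ (le_of_lt hc)]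
        ring
      rw [this]
      apply dvd_neg.mpr
      have hsym : r - 1 = p - (n+1) := by omega
      rw [hsym]
      exact aux_sym p hodd (n+1)
  refine ⟨m, ?_⟩
  have hcast : ((∑ k ∈ range (n+1), (k : ℤ) ^ p) - ∑ k ∈ range r, (k : ℤ) ^ p : ℚ)
      = (∑ k ∈ range (n+1), (k : ℚ) ^ p) - ∑ k ∈ range r, (k : ℚ) ^ p := by
    push_cast; ring
  have hq : (∑ k ∈ range (n+1), (k : ℚ) ^ p) - ∑ k ∈ range r, (k : ℚ) ^ p
      = ((p:ℚ))^2 * m := by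
    have := congrArg (fun z : ℤ => (z : ℚ)) hm
    push_cast at this
    linarith
  -- now assemble
  have hsplit : ∑ k ∈ Finset.Icc 1 n, ((k : ℚ) ^ p - (k : ℚ))
      = (∑ k ∈ range (n+1), (k : ℚ) ^ p) - ∑ k ∈ Finset.Icc 1 n, (k : ℚ) := by
    rw [Finset.sum_sub_distrib, hIcc (fun k => (k:ℚ)^p) (by simp [hp.pos.ne'])]
  have hFaul : (((Polynomial.bernoulli (p + 1)).eval (r : ℚ)
      - (Polynomial.bernoulli (p + 1)).eval 0) / ((p : ℚ) + 1))
      = ∑ k ∈ range r, (k : ℚ) ^ p := by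
    rw [hBr, mul_div_cancel_left₀ _ hp1]
  have hpr2 : 1 + (p:ℚ) - r = 1 + (n:ℚ) := by rw [add_sub_assoc, hpr]
  rw [hsplit, hFaul, hGauss, hpr2, hpr]
  linear_combination hq
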